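/- Let A be a 4×4 normal idempotent matrix with first two columns p, q, and suppose a_{32} + a_{41} < a_{31} + a_{42} (type {13,24}). Then the points v¹³ = (-a_{41}, -a_{42}, a_{31} - a_{41}, 0) and v²⁴ = (-a_{31}, -a_{32}, 0, a_{42} - a_{32}) are tropical linear combinations of p and q: v¹³ ≡ max(p + (-a_{41})·1, q + (-a_{42})·1) and v²⁴ ≡ max(p + (-a_{31})·1, q + (-a_{32})·1) modulo (1,1,1,1), where max is taken coordinatewise. -/
import Mathlib


/-- For a 4×4 normal idempotent matrix with `a_{32}+a_{41} < a_{31}+a_{42}`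
(type {13,24}), the vertices `v¹³ = (-a_{41}, -a_{42}, a_{31}-a_{41}, 0)` and
`v²⁴ = (-a_{31}, -a_{32}, 0, a_{42}-a_{32})` are tropical linear combinations of
the first two columns `p, q` of `A`, modulo `(1,1,1,1)`. -/
theorem stmt12 (A : Matrix (Fin 4) (Fin 4) ℝ)
    (hdiag : ∀ i, A i i = 0) (hneg : ∀ i j, A i j ≤ 0)
    (hsub : ∀ i j k, A i k + A k j ≤ A i j)
    (htype : A 2 1 + A 3 0 < A 2 0 + A 3 1) :
    (∃ c : ℝ, ∀ i,
      (![-(A 3 0), -(A 3 1), A 2 0 - A 3 0, 0] : Fin 4 → ℝ) i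
        = max (A i 0 + (-(A 3 0))) (A i 1 + (-(A 3 1))) + c) ∧
    (∃ c : ℝ, ∀ i,
      (![-(A 2 0), -(A 2 1), 0, A 3 1 - A 2 1] : Fin 4 → ℝ) i
        = max (A i 0 + (-(A 2 0))) (A i 1 + (-(A 2 1))) + c) := by
  constructor
  · refine ⟨0, fun i => ?_⟩
    fin_cases i
    · simpa [hdiag] using (max_eq_left (a := -A 3 0) (b := A 0 1 + -A 3 1)
        (by have := hsub 3 1 0; linarith)).symm
    · simpa [hdiag] using (max_eq_right (a := A 1 0 + -A 3 0) (b := -A 3 1)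
        (by have := hsub 3 0 1; linarith)).symm
    · have : A 2 1 + -A 3 1 ≤ A 2 0 + -A 3 0 := by linarith
      simp [max_eq_left this]; ring
    · simp [hdiag]
  · refine ⟨0, fun i => ?_⟩
    fin_cases i
    · simpa [hdiag] using (max_eq_left (a := -A 2 0) (b := A 0 1 + -A 2 1)
        (by have := hsub 2 1 0; linarith)).symm
    · simpa [hdiag] using (max_eq_right (a := A 1 0 + -A 2 0) (b := -A 2 1)
        (by have := hsub 2 0 1; linarith)).symm
    · simp [hdiag]
    · have : A 3 0 + -A 2 0 ≤ A 3 1 + -A 2 1 := by linarith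
      simp [max_eq_right this]; ring
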